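/- Let z_i = 1+x_i in \mathcal{O}(2r;1), char p > 0. For all multi-indices \beta, the element D_H(z^\beta) is an eigenvector of ad D_H(z_1 z_{r+1}) with eigenvalue \beta_{r+1} - \beta_1 (an element of the prime field). -/

import Mathlib

set_option synthInstance.maxHeartbeats 1000000
set_option maxHeartbeats 1000000

noncomputable abbrev TruncO (F : Type*) [Field F] (p m : ℕ) : Type _ :=
  MvPolynomial (Fin m) F ⧸ Ideal.span (Set.range fun i : Fin m =>
    (MvPolynomial.X i : MvPolynomial (Fin m) F) ^ p)

noncomputable def xv (F : Type*) [Field F] (p m : ℕ) (i : Fin m) : TruncO F p m :=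
  Ideal.Quotient.mk _ (MvPolynomial.X i)

section Aux

variable {F : Type*} [Field F] (p m : ℕ)

theorem xv_adjoin : Algebra.adjoin F (Set.range (xv F p m)) = ⊤ := by
  have h1 : Set.range (xv F p m) =
      (Ideal.Quotient.mkₐ F (Ideal.span (Set.range fun i : Fin m =>
        (MvPolynomial.X i : MvPolynomial (Fin m) F) ^ p))) ''
        (Set.range (MvPolynomial.X : Fin m → MvPolynomial (Fin m) F)) := by
    rw [← Set.range_comp]; rfl
  rw [h1, ← AlgHom.map_adjoin, MvPolynomial.adjoin_range_X, Algebra.map_top]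
  exact (AlgHom.range_eq_top _).mpr (Ideal.Quotient.mkₐ_surjective F _)

theorem deriv_ext (D1 D2 : Derivation F (TruncO F p m) (TruncO F p m))
    (h : ∀ i, D1 (xv F p m i) = D2 (xv F p m i)) : D1 = D2 :=
  Derivation.ext_of_adjoin_eq_top _ (xv_adjoin p m)
    (by rintro _ ⟨i, rfl⟩; exact h i)

variable {p m}
variable (pd : Fin m → Derivation F (TruncO F p m) (TruncO F p m))
  (hpd : ∀ i j, pd i (xv F p m j) = if i = j then 1 else 0)

include hpd in
theorem hz (i j : Fin m) : pd i (1 + xv F p m j) = if i = j then 1 else 0 := by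
  rw [map_add, Derivation.map_one_eq_zero, zero_add, hpd]

theorem prodUpdate (i : Fin m) (n : Fin m → ℕ) (k : ℕ) :
    ∏ l, (1 + xv F p m l) ^ (Function.update n i k l)
      = (1 + xv F p m i) ^ k *
        ∏ l ∈ Finset.univ.erase i, (1 + xv F p m l) ^ n l := by
  rw [← Finset.mul_prod_erase Finset.univ _ (Finset.mem_univ i), Function.update_self]
  congr 1
  exact Finset.prod_congr rfl fun l hl => by
    rw [Function.update_of_ne (Finset.ne_of_mem_erase hl)]

include hpd in
theorem pdP (i : Fin m) (n : Fin m → ℕ) :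
    pd i (∏ l, (1 + xv F p m l) ^ n l) =
      ((n i : F)) • ∏ l, (1 + xv F p m l) ^ (Function.update n i (n i - 1) l) := by
  rw [← Finset.mul_prod_erase Finset.univ _ (Finset.mem_univ i), Derivation.leibniz]
  have h0 : pd i (∏ l ∈ Finset.univ.erase i, (1 + xv F p m l) ^ n l) = 0 := by
    refine Finset.prod_induction _ (fun a => pd i a = 0)
      (fun a b ha hb => by
        rw [Derivation.leibniz, ha, hb, smul_zero, smul_zero, add_zero])
      (Derivation.map_one_eq_zero _) (fun l hl => ?_)
    rw [Derivation.leibniz_pow, hz pd hpd, if_neg (Finset.ne_of_mem_erase hl).symm]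
    simp
  rw [h0, smul_zero, zero_add, Derivation.leibniz_pow, hz pd hpd, if_pos rfl, prodUpdate]
  simp only [smul_eq_mul, mul_one]
  rw [← Nat.cast_smul_eq_nsmul F, mul_smul_comm, mul_comm]

include hpd in
theorem zpd (j : Fin m) (n : Fin m → ℕ) :
    (1 + xv F p m j) * pd j (∏ l, (1 + xv F p m l) ^ n l)
      = ((n j : F)) • ∏ l, (1 + xv F p m l) ^ n l := by
  rw [pdP pd hpd, prodUpdate]
  rcases Nat.eq_zero_or_pos (n j) with h | h
  · simp [h]
  · rw [mul_smul_comm, ← mul_assoc, ← pow_succ', show n j - 1 + 1 = n j by omega,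
      Finset.mul_prod_erase Finset.univ (fun l => (1 + xv F p m l) ^ n l)
        (Finset.mem_univ j)]

variable (prm : Fin m → Fin m) (sg : Fin m → F) (i0 ir : Fin m)

theorem hsum (g : Fin m → Derivation F (TruncO F p m) (TruncO F p m))
    (a : TruncO F p m) : (∑ i, g i) a = ∑ i, g i a := by
  have h2 : ⇑(∑ i, g i) = ∑ i, ⇑(g i) :=
    map_sum (Derivation.coeFnAddMonoidHom (R := F) (A := TruncO F p m)
      (M := TruncO F p m)) g Finset.univ
  rw [show (∑ i, g i) a = (⇑(∑ i, g i)) a from rfl, h2, Finset.sum_apply]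

theorem DHapp (f g : TruncO F p m) :
    (∑ i, (sg i • pd i f) • pd (prm i)) g
      = ∑ i, sg i • (pd i f * pd (prm i) g) := by
  rw [hsum]
  exact Finset.sum_congr rfl fun i _ => by
    rw [Derivation.smul_apply, smul_eq_mul, smul_mul_assoc]

include hpd in
theorem DHx (hpriff : ∀ i j, prm i = j ↔ i = prm j) (f : TruncO F p m) (j : Fin m) :
    (∑ i, (sg i • pd i f) • pd (prm i)) (xv F p m j)
      = sg (prm j) • (pd (prm j) f) := by
  rw [DHapp]
  have key : ∀ i : Fin m, sg i • (pd i f * pd (prm i) (xv F p m j))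
      = if i = prm j then sg i • pd i f else 0 := by
    intro i
    rw [hpd]
    by_cases h : i = prm j
    · subst h; rw [if_pos ((hpriff _ _).mpr rfl), if_pos rfl, mul_one]
    · rw [if_neg (fun hc => h ((hpriff _ _).mp hc)), if_neg h, mul_zero, smul_zero]
  rw [Finset.sum_congr rfl fun i _ => key i, Finset.sum_ite_eq' Finset.univ,
    if_pos (Finset.mem_univ _)]

include hpd in
theorem DHz (hpriff : ∀ i j, prm i = j ↔ i = prm j) (f : TruncO F p m) (j : Fin m) :
    (∑ i, (sg i • pd i f) • pd (prm i)) (1 + xv F p m j)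
      = sg (prm j) • (pd (prm j) f) := by
  rw [map_add, Derivation.map_one_eq_zero, zero_add, DHx pd hpd prm sg hpriff]

include hpd in
theorem pd01 (hi0r : i0 ≠ ir) (k : Fin m) :
    pd k ((1 + xv F p m i0) * (1 + xv F p m ir))
      = (if k = i0 then (1 + xv F p m ir) else 0)
        + (if k = ir then (1 + xv F p m i0) else 0) := by
  rw [Derivation.leibniz, hz pd hpd, hz pd hpd]
  by_cases h0 : k = i0
  · subst h0
    rw [if_pos rfl, if_neg hi0r, if_pos rfl, if_neg hi0r, smul_zero, zero_add,
      add_zero, smul_eq_mul, mul_one]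
  · rw [if_neg h0, if_neg h0, smul_zero, zero_add, add_zero]
    by_cases hrr : k = ir
    · subst hrr; rw [if_pos rfl, if_pos rfl, smul_eq_mul, mul_one]
    · rw [if_neg hrr, if_neg hrr, smul_zero]

include hpd in
theorem LElem (hpr0 : prm i0 = ir) (hprr : prm ir = i0)
    (hs0 : sg i0 = 1) (hsr : sg ir = -1) (hi0r : i0 ≠ ir) (n : Fin m → ℕ) :
    (∑ i, (sg i • pd i ((1 + xv F p m i0) * (1 + xv F p m ir))) • pd (prm i))
        (∏ l, (1 + xv F p m l) ^ n l)
      = (((n ir : F)) - ((n i0 : F))) • ∏ l, (1 + xv F p m l) ^ n l := by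
  rw [DHapp]
  have hsplit : ∀ i : Fin m,
      sg i • (pd i ((1 + xv F p m i0) * (1 + xv F p m ir))
          * pd (prm i) (∏ l, (1 + xv F p m l) ^ n l))
        = (if i = i0 then
            sg i • ((1 + xv F p m ir) * pd (prm i) (∏ l, (1 + xv F p m l) ^ n l))
            else 0)
          + (if i = ir then
            sg i • ((1 + xv F p m i0) * pd (prm i) (∏ l, (1 + xv F p m l) ^ n l))
            else 0) := by
    intro i
    rw [pd01 pd hpd i0 ir hi0r, add_mul, smul_add]
    split_ifs <;> simp
  rw [Finset.sum_congr rfl fun i _ => hsplit i, Finset.sum_add_distrib,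
    Finset.sum_ite_eq' Finset.univ, Finset.sum_ite_eq' Finset.univ,
    if_pos (Finset.mem_univ _), if_pos (Finset.mem_univ _), hpr0, hprr, hs0, hsr,
    zpd pd hpd ir n, zpd pd hpd i0 n, one_smul, sub_smul, neg_smul, one_smul,
    ← sub_eq_add_neg]

include hpd in
theorem keylem (hpriff : ∀ i j, prm i = j ↔ i = prm j)
    (hpr0 : prm i0 = ir) (hprr : prm ir = i0)
    (hs0 : sg i0 = 1) (hsr : sg ir = -1) (hi0r : i0 ≠ ir)
    (N : Fin m → ℕ) (k : Fin m) :
    sg k • (∑ i, (sg i • pd i ((1 + xv F p m i0) * (1 + xv F p m ir))) • pd (prm i))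
        (pd k (∏ l, (1 + xv F p m l) ^ N l))
      - sg k • (∑ i, (sg i • pd i (∏ l, (1 + xv F p m l) ^ N l)) • pd (prm i))
        (pd k ((1 + xv F p m i0) * (1 + xv F p m ir)))
      = ((N ir : F) - (N i0 : F)) • sg k • pd k (∏ l, (1 + xv F p m l) ^ N l) := by
  have hpdk := pdP pd hpd k N
  rw [hpdk, Derivation.map_smul, LElem pd hpd prm sg i0 ir hpr0 hprr hs0 hsr hi0r,
    pd01 pd hpd i0 ir hi0r k]
  by_cases hk0 : k = i0
  · rw [hk0]
    rw [if_pos rfl, if_neg hi0r, add_zero, DHz pd hpd prm sg hpriff _ ir, hprr, hs0,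
      pdP pd hpd i0 N]
    have hMi0 : Function.update N i0 (N i0 - 1) i0 = N i0 - 1 :=
      Function.update_self _ _ _
    have hMir : Function.update N i0 (N i0 - 1) ir = N ir :=
      Function.update_of_ne (Ne.symm hi0r) _ _
    rw [hMi0, hMir]
    rcases Nat.eq_zero_or_pos (N i0) with h00 | h00
    · rw [h00]; norm_num
    · rw [Nat.cast_sub h00, Nat.cast_one]
      simp only [smul_smul, one_mul, one_smul, ← sub_smul]
      congr 1
      ring
  · by_cases hkr : k = ir
    · rw [hkr]
      rw [if_neg (Ne.symm hi0r), if_pos rfl, zero_add, DHz pd hpd prm sg hpriff _ i0,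
        hpr0, hsr, pdP pd hpd ir N]
      have hMir : Function.update N ir (N ir - 1) ir = N ir - 1 :=
        Function.update_self _ _ _
      have hMi0 : Function.update N ir (N ir - 1) i0 = N i0 :=
        Function.update_of_ne hi0r _ _
      rw [hMir, hMi0]
      rcases Nat.eq_zero_or_pos (N ir) with h00 | h00
      · rw [h00]; norm_num
      · rw [Nat.cast_sub h00, Nat.cast_one]
        simp only [smul_smul, ← sub_smul]
        congr 1
        ring
    · rw [if_neg hk0, if_neg hkr, add_zero, map_zero, smul_zero, sub_zero]
      have hMir : Function.update N k (N k - 1) ir = N ir :=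
        Function.update_of_ne (fun h => hkr h.symm) _ _
      have hMi0 : Function.update N k (N k - 1) i0 = N i0 :=
        Function.update_of_ne (fun h => hk0 h.symm) _ _
      rw [hMir, hMi0]
      simp only [smul_smul]
      congr 1
      ring

include hpd in
theorem mainlem
    (hpriff : ∀ i j, prm i = j ↔ i = prm j)
    (hpr0 : prm i0 = ir) (hprr : prm ir = i0)
    (hs0 : sg i0 = 1) (hsr : sg ir = -1) (hi0r : i0 ≠ ir)
    (N : Fin m → ℕ) :
    ⁅∑ i, (sg i • pd i ((1 + xv F p m i0) * (1 + xv F p m ir))) • pd (prm i),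
      ∑ i, (sg i • pd i (∏ l, (1 + xv F p m l) ^ N l)) • pd (prm i)⁆
      = ((N ir : F) - (N i0 : F)) •
        ∑ i, (sg i • pd i (∏ l, (1 + xv F p m l) ^ N l)) • pd (prm i) := by
  refine deriv_ext p m _ _ fun j => ?_
  rw [Derivation.commutator_apply, Derivation.smul_apply,
    DHx pd hpd prm sg hpriff _ j, DHx pd hpd prm sg hpriff _ j,
    Derivation.map_smul, Derivation.map_smul]
  exact keylem pd hpd prm sg i0 ir hpriff hpr0 hprr hs0 hsr hi0r N (prm j)

end Aux

/-- With `z_i = 1 + x_i` in `𝒪(2r;1)`, each `D_H(z^β)` is an eigenvector of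
`ad D_H(z_1 z_{r+1})` with eigenvalue `β_{r+1} - β_1 ∈ GF(p)`. -/
theorem stmt12 {F : Type*} [Field F] (p r : ℕ) (hp : p.Prime) [CharP F p] (hr : 1 ≤ r)
    (pd : Fin (2 * r) → Derivation F (TruncO F p (2 * r)) (TruncO F p (2 * r)))
    (hpd : ∀ i j : Fin (2 * r), pd i (xv F p (2 * r) j) = if i = j then 1 else 0)
    (β : Fin (2 * r) → ZMod p) :
    let pr : Fin (2 * r) → Fin (2 * r) := fun i =>
      if h : (i : ℕ) < r then ⟨(i : ℕ) + r, by omega⟩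
      else ⟨(i : ℕ) - r, by have := i.isLt; omega⟩
    let σ : Fin (2 * r) → F := fun i => if (i : ℕ) < r then 1 else -1
    let DH : TruncO F p (2 * r) →
        Derivation F (TruncO F p (2 * r)) (TruncO F p (2 * r)) :=
      fun f => ∑ i, (σ i • pd i f) • pd (pr i)
    let i0 : Fin (2 * r) := ⟨0, by omega⟩
    let ir : Fin (2 * r) := ⟨r, by omega⟩
    let z : Fin (2 * r) → TruncO F p (2 * r) := fun i => 1 + xv F p (2 * r) i
    let zp : (Fin (2 * r) → ZMod p) → TruncO F p (2 * r) :=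
      fun a => ∏ i, z i ^ (a i).val
    ⁅DH (z i0 * z ir), DH (zp β)⁆ =
      (((β ir - β i0 : ZMod p)).val : F) • DH (zp β) := by
  intro pr σ DH i0 ir z zp
  haveI : NeZero p := ⟨hp.ne_zero⟩
  have hi0v : (i0 : ℕ) = 0 := rfl
  have hirv : (ir : ℕ) = r := rfl
  have hprv : ∀ i : Fin (2 * r),
      ((pr i : ℕ)) = if (i : ℕ) < r then (i : ℕ) + r else (i : ℕ) - r := by
    intro i
    by_cases h : (i : ℕ) < r
    · rw [if_pos h]
      exact congrArg Fin.val (dif_pos h : pr i = _)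
    · rw [if_neg h]
      exact congrArg Fin.val (dif_neg h : pr i = _)
  have h0r : (i0 : ℕ) < r := by rw [hi0v]; omega
  have hrr' : ¬ (ir : ℕ) < r := by rw [hirv]; omega
  have hpr0 : pr i0 = ir := by
    apply Fin.ext
    rw [hprv, hi0v, hirv, if_pos (by omega : (0:ℕ) < r)]
    omega
  have hprr : pr ir = i0 := by
    apply Fin.ext
    rw [hprv, hirv, hi0v, if_neg (by omega : ¬ (r:ℕ) < r)]
    omega
  have hpri : ∀ j, pr (pr j) = j := by
    intro j
    have hj := j.isLt
    apply Fin.ext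
    rw [hprv, hprv]
    split_ifs <;> omega
  have hpriff : ∀ i j, pr i = j ↔ i = pr j := by
    intro i j
    constructor
    · rintro rfl; rw [hpri]
    · rintro rfl; rw [hpri]
  have hσ0 : σ i0 = 1 := if_pos h0r
  have hσr : σ ir = -1 := if_neg hrr'
  have hi0r : i0 ≠ ir := by
    intro h
    have := congrArg Fin.val h
    rw [hi0v, hirv] at this
    omega
  have hc0 : (((β ir - β i0 : ZMod p)).val : F)
      = ((((β ir).val : ℕ) : F) - (((β i0).val : ℕ) : F)) := by
    have hsub := (ZMod.castHom (dvd_refl p) F).map_sub (β ir) (β i0)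
    simp only [ZMod.castHom_apply] at hsub
    rw [ZMod.natCast_val, hsub, ← ZMod.natCast_val, ← ZMod.natCast_val]
  rw [hc0]
  exact mainlem pd hpd pr σ i0 ir hpriff hpr0 hprr hσ0 hσr hi0r (fun l => (β l).val)
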